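/- There exist absolute constants ε_0 ∈ (0,1) and C, c > 0 such that the following holds. Fix ε ∈ (0, ε_0] and a ∈ (0,1); set b := 1/6; let n be sufficiently large (depending on a and ε), set q := ⌈a n^ε⌉ and ρ̃ := a q^b / n; let I_1 < ⋯ < I_q be a partition of {0,1,…,n} into nonempty consecutive intervals of integers, each of cardinality at most 2(n+1)/q; set 𝔸_t := {r ∈ ℍ_n : r_1 ∈ I_t} and F_t := Σ_{r∈𝔸_t} f_r for any fixed choice of r-functions (f_r)_{r∈ℍ_n}; and let Ψ := ∏_{t=1}^{q} (1 + ρ̃ F_t). Then the Lebesgue measure of {x ∈ [0,1]^3 : Ψ(x) < 0} is at most C q exp(−c a^{−1} q^{1/3}). -/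

import Mathlib

open MeasureTheory
open scoped ENNReal Classical

/-- The `L^∞`-normalized Haar function of the dyadic interval `[j/2^k, (j+1)/2^k)`:
it is `-1` on the left half, `+1` on the right half, and `0` outside. -/
noncomputable def haar1 (k j : ℕ) (x : ℝ) : ℝ :=
  if (j : ℝ) / 2 ^ k ≤ x ∧ x < ((j : ℝ) + 1 / 2) / 2 ^ k then -1
  else if ((j : ℝ) + 1 / 2) / 2 ^ k ≤ x ∧ x < ((j : ℝ) + 1) / 2 ^ k then 1
  else 0

/-- A dyadic rectangle in `[0,1]^d` is encoded by its levels `R.1` and positions `R.2`;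
its `i`-th side interval is `[R.2 i / 2 ^ R.1 i, (R.2 i + 1) / 2 ^ R.1 i)`.
`haarR R` is the associated (tensor product) Haar function. -/
noncomputable def haarR {d : ℕ} (R : (Fin d → ℕ) × (Fin d → ℕ)) (x : Fin d → ℝ) : ℝ :=
  ∏ i, haar1 (R.1 i) (R.2 i) (x i)

/-- The dyadic rectangles in `[0,1]^d` of volume exactly `2 ^ (-n)`. -/
def rectsEq (d n : ℕ) : Finset ((Fin d → ℕ) × (Fin d → ℕ)) :=
  ((Fintype.piFinset fun _ => Finset.range (n + 1)) ×ˢ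
      (Fintype.piFinset fun _ => Finset.range (2 ^ n))).filter
    fun R => (∑ i, R.1 i) = n ∧ ∀ i, R.2 i < 2 ^ R.1 i

/-- The dyadic rectangles in `[0,1]^d` of volume at least `2 ^ (-n)`. -/
def rectsGe (d n : ℕ) : Finset ((Fin d → ℕ) × (Fin d → ℕ)) :=
  ((Fintype.piFinset fun _ => Finset.range (n + 1)) ×ˢ
      (Fintype.piFinset fun _ => Finset.range (2 ^ n))).filter
    fun R => (∑ i, R.1 i) ≤ n ∧ ∀ i, R.2 i < 2 ^ R.1 i

/-- The unit cube `[0,1]^d`. -/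
def unitCube (d : ℕ) : Set (Fin d → ℝ) := Set.univ.pi fun _ => Set.Icc 0 1

/-- `ℍ_n`: triples `r = (r 0, r 1, r 2)` of natural numbers with `r 0 + r 1 + r 2 = n`. -/
def Hn (n : ℕ) : Finset (Fin 3 → ℕ) :=
  (Fintype.piFinset fun _ => Finset.range (n + 1)).filter fun r => ∑ i, r i = n

/-- The `r`-function with parameter `r ∈ ℍ_n` built from the signs `ε`:
`f_r = ∑_{R ∈ 𝓡_r} ε_R h_R`, the sum over all dyadic rectangles with levels `r`. -/
noncomputable def rfun (ε : ((Fin 3 → ℕ) × (Fin 3 → ℕ)) → ℝ) (r : Fin 3 → ℕ)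
    (x : Fin 3 → ℝ) : ℝ :=
  ∑ j ∈ Fintype.piFinset (fun i => Finset.range (2 ^ r i)), ε (r, j) * haarR (r, j) x

/-- `ℂ(2)`: pairs of distinct vectors in `ℍ_n` agreeing in the second coordinate. -/
def C2 (n : ℕ) : Finset ((Fin 3 → ℕ) × (Fin 3 → ℕ)) :=
  ((Hn n) ×ˢ (Hn n)).filter fun rs => rs.1 ≠ rs.2 ∧ rs.1 1 = rs.2 1

/-- Given partition boundaries `m`, the set `𝔸_t ⊆ ℍ_n` of vectors whose first
coordinate lies in the `t`-th interval `I_t = [m (t-1), m t)` of the partition. -/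
def Apart (n : ℕ) (m : ℕ → ℕ) (t : ℕ) : Finset (Fin 3 → ℕ) :=
  (Hn n).filter fun r => m (t - 1) ≤ r 0 ∧ r 0 < m t

namespace RPdev


/-- clip to `[-w, w]`. -/
noncomputable def clip (w x : ℝ) : ℝ := max (-w) (min x w)

lemma abs_clip_le {w : ℝ} (hw : 0 ≤ w) (x : ℝ) : |clip w x| ≤ w := by
  rw [abs_le]
  constructor
  · exact le_max_left _ _
  · exact max_le (by linarith) (min_le_right _ _)

lemma clip_of_abs_le {w x : ℝ} (h : |x| ≤ w) : clip w x = x := by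
  rw [abs_le] at h
  rw [clip, min_eq_left h.2, max_eq_right h.1]

/-- xor of two numbers below `2^k` is below `2^k`. -/
lemma xor_lt_two_pow' {x y k : ℕ} (hx : x < 2 ^ k) (hy : y < 2 ^ k) : x ^^^ y < 2 ^ k :=
  Nat.bitwise_lt_two_pow hx hy

lemma xor_pow_div {u b p : ℕ} (h : b < p) : (u ^^^ 2 ^ b) / 2 ^ p = u / 2 ^ p := by
  have h1 : (u ^^^ 2 ^ b) >>> p = u >>> p := by
    apply Nat.eq_of_testBit_eq
    intro j
    simp only [Nat.testBit_shiftRight, Nat.testBit_xor,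
      Nat.testBit_two_pow_of_ne (by omega : b ≠ p + j)]
    simp
  simpa [Nat.shiftRight_eq_div_pow] using h1

lemma testBit_xor_self (u b : ℕ) : (u ^^^ 2 ^ b).testBit b = !u.testBit b := by
  simp [Nat.testBit_xor]

lemma testBit_xor_ne {u b b' : ℕ} (h : b ≠ b') : (u ^^^ 2 ^ b).testBit b' = u.testBit b' := by
  simp [Nat.testBit_xor, Nat.testBit_two_pow_of_ne h]

/-! ### The discrete model -/

/-- the finite grid `[0, 2^(n+1))^3` indexing dyadic boxes of side `2^(n+1)`. -/
def U (n : ℕ) : Finset (Fin 3 → ℕ) := Fintype.piFinset fun _ => Finset.range (2 ^ (n + 1))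

lemma mem_U {n : ℕ} {u : Fin 3 → ℕ} : u ∈ U n ↔ ∀ i, u i < 2 ^ (n + 1) := by
  simp [U]

lemma card_U (n : ℕ) : (U n).card = (2 ^ (n + 1)) ^ 3 := by
  simp [U, Fintype.card_piFinset]

/-- flip the bit at position `b` of coordinate `i`. -/
def flipU (i : Fin 3) (b : ℕ) (u : Fin 3 → ℕ) : Fin 3 → ℕ :=
  Function.update u i (u i ^^^ 2 ^ b)

lemma flipU_apply_self (i : Fin 3) (b : ℕ) (u : Fin 3 → ℕ) :
    flipU i b u i = u i ^^^ 2 ^ b := by simp [flipU]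

lemma flipU_apply_ne {i i' : Fin 3} (h : i' ≠ i) (b : ℕ) (u : Fin 3 → ℕ) :
    flipU i b u i' = u i' := by simp [flipU, Function.update_of_ne h]

lemma flipU_flipU (i : Fin 3) (b : ℕ) (u : Fin 3 → ℕ) : flipU i b (flipU i b u) = u := by
  funext i'
  by_cases h : i' = i
  · subst h; simp [flipU, Nat.xor_assoc]
  · simp [flipU, Function.update_of_ne h]

lemma flipU_mem_U {n : ℕ} {i : Fin 3} {b : ℕ} (hb : b ≤ n) {u : Fin 3 → ℕ} (hu : u ∈ U n) :
    flipU i b u ∈ U n := by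
  rw [mem_U] at hu ⊢
  intro i'
  by_cases h : i' = i
  · rw [h, flipU_apply_self]
    exact xor_lt_two_pow' (hu i) (Nat.pow_lt_pow_right one_lt_two (by omega))
  · rw [flipU_apply_ne h]; exact hu i'

/-- the `±1` sign of level `k` in coordinate `i` (bit `n - k`). -/
noncomputable def sg (n : ℕ) (i : Fin 3) (k : ℕ) (u : Fin 3 → ℕ) : ℝ :=
  if (u i).testBit (n - k) then 1 else -1

/-- positions: `Jp n r u i` is the dyadic position of level `r i` of `u i`. -/
def Jp (n : ℕ) (r u : Fin 3 → ℕ) : Fin 3 → ℕ := fun i => u i / 2 ^ (n + 1 - r i)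

lemma abs_sg (n : ℕ) (i : Fin 3) (k : ℕ) (u : Fin 3 → ℕ) : |sg n i k u| = 1 := by
  rw [sg]; split <;> simp

lemma sg_flip_self {n k : ℕ} (i : Fin 3) (u : Fin 3 → ℕ) :
    sg n i k (flipU i (n - k) u) = - sg n i k u := by
  rw [sg, sg, flipU_apply_self, testBit_xor_self]
  cases (u i).testBit (n - k) <;> simp

lemma sg_flip_ne_coord {n k : ℕ} {i i' : Fin 3} (h : i' ≠ i) (b : ℕ) (u : Fin 3 → ℕ) :
    sg n i' k (flipU i b u) = sg n i' k u := by
  rw [sg, sg, flipU_apply_ne h]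

lemma sg_flip_ne_bit {n k b : ℕ} (h : b ≠ n - k) (i : Fin 3) (u : Fin 3 → ℕ) :
    sg n i k (flipU i b u) = sg n i k u := by
  rw [sg, sg, flipU_apply_self, testBit_xor_ne h]

lemma Jp_flip {n b : ℕ} {r : Fin 3 → ℕ} {i : Fin 3} (h : b < n + 1 - r i) (u : Fin 3 → ℕ) :
    Jp n r (flipU i b u) = Jp n r u := by
  funext i'
  by_cases hi : i' = i
  · subst hi
    show flipU i' b u i' / 2 ^ (n + 1 - r i') = u i' / 2 ^ (n + 1 - r i')
    rw [flipU_apply_self, xor_pow_div h]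
  · rw [Jp, flipU_apply_ne hi]; rfl


/-! ### Discrete r-functions -/

noncomputable def Yf (n : ℕ) (ε : ((Fin 3 → ℕ) × (Fin 3 → ℕ)) → ℝ) (r u : Fin 3 → ℕ) : ℝ :=
  ε (r, Jp n r u) * (sg n 1 (r 1) u * sg n 2 (r 2) u)

noncomputable def Xf (n : ℕ) (ε : ((Fin 3 → ℕ) × (Fin 3 → ℕ)) → ℝ) (r u : Fin 3 → ℕ) : ℝ :=
  sg n 0 (r 0) u * Yf n ε r u

lemma abs_Yf {ε : ((Fin 3 → ℕ) × (Fin 3 → ℕ)) → ℝ} (hε : ∀ R, ε R = 1 ∨ ε R = -1)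
    (n : ℕ) (r u : Fin 3 → ℕ) : |Yf n ε r u| = 1 := by
  rw [Yf, abs_mul, abs_mul, abs_sg, abs_sg]
  rcases hε (r, Jp n r u) with h | h <;> rw [h] <;> norm_num

lemma Yf_flip0 {n b : ℕ} {r : Fin 3 → ℕ} (h : b < n + 1 - r 0)
    (ε : ((Fin 3 → ℕ) × (Fin 3 → ℕ)) → ℝ) (u : Fin 3 → ℕ) :
    Yf n ε r (flipU 0 b u) = Yf n ε r u := by
  rw [Yf, Yf, Jp_flip h, sg_flip_ne_coord (by decide) , sg_flip_ne_coord (by decide)]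

lemma Yf_flip1_self {n : ℕ} {r : Fin 3 → ℕ} (h1 : r 1 ≤ n)
    (ε : ((Fin 3 → ℕ) × (Fin 3 → ℕ)) → ℝ) (u : Fin 3 → ℕ) :
    Yf n ε r (flipU 1 (n - r 1) u) = - Yf n ε r u := by
  rw [Yf, Yf, Jp_flip (by omega), sg_flip_self, sg_flip_ne_coord (by decide)]
  ring

lemma Yf_flip1_low {n b : ℕ} {r : Fin 3 → ℕ} (hb : b < n + 1 - r 1) (hbit : b ≠ n - r 1)
    (ε : ((Fin 3 → ℕ) × (Fin 3 → ℕ)) → ℝ) (u : Fin 3 → ℕ) :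
    Yf n ε r (flipU 1 b u) = Yf n ε r u := by
  rw [Yf, Yf, Jp_flip hb, sg_flip_ne_bit hbit, sg_flip_ne_coord (by decide)]

lemma Xf_flip0_self {n : ℕ} {r : Fin 3 → ℕ} (h0 : r 0 ≤ n)
    (ε : ((Fin 3 → ℕ) × (Fin 3 → ℕ)) → ℝ) (u : Fin 3 → ℕ) :
    Xf n ε r (flipU 0 (n - r 0) u) = - Xf n ε r u := by
  rw [Xf, Xf, sg_flip_self, Yf_flip0 (by omega)]
  ring

/-! ### The peeling (Hoeffding) estimate -/

lemma zero_mem_U (n : ℕ) : (fun _ => 0 : Fin 3 → ℕ) ∈ U n := by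
  rw [mem_U]; intro i; positivity

lemma peel (n : ℕ) (S : Finset ℕ) (T : ℕ → (Fin 3 → ℕ) → ℝ)
    (φ : ℕ → (Fin 3 → ℕ) → (Fin 3 → ℕ)) (w : ℕ → ℝ)
    (hmem : ∀ s ∈ S, ∀ u ∈ U n, φ s u ∈ U n)
    (hinv : ∀ s ∈ S, ∀ u, φ s (φ s u) = u)
    (hanti : ∀ s ∈ S, ∀ u ∈ U n, T s (φ s u) = - T s u)
    (hlow : ∀ s ∈ S, ∀ s' ∈ S, s' < s → ∀ u ∈ U n, T s' (φ s u) = T s' u)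
    (hbdd : ∀ s ∈ S, ∀ u ∈ U n, |T s u| ≤ w s) :
    ∑ u ∈ U n, Real.exp (∑ s ∈ S, T s u) ≤ (U n).card * Real.exp (∑ s ∈ S, w s ^ 2 / 2) := by
  classical
  induction S using Finset.induction_on_max with
  | empty => simp
  | insert a s hmax ih =>
    have ha : a ∉ s := fun h => lt_irrefl a (hmax a h)
    have hamem : a ∈ insert a s := Finset.mem_insert_self a s
    have hsmem : ∀ s' ∈ s, s' ∈ insert a s := fun s' h => Finset.mem_insert_of_mem h
    -- reindexing by the involution φ a
    have reidx : ∀ g : (Fin 3 → ℕ) → ℝ, ∑ u ∈ U n, g (φ a u) = ∑ u ∈ U n, g u := by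
      intro g
      apply Finset.sum_nbij' (i := φ a) (j := φ a)
      · intro u hu; exact hmem a hamem u hu
      · intro u hu; exact hmem a hamem u hu
      · intro u _; exact hinv a hamem u
      · intro u _; exact hinv a hamem u
      · intro u _; rfl
    have hwa : 0 ≤ w a := le_trans (abs_nonneg _) (hbdd a hamem _ (zero_mem_U n))
    have key : ∀ u ∈ U n,
        Real.exp (∑ s' ∈ insert a s, T s' u) + Real.exp (∑ s' ∈ insert a s, T s' (φ a u))
          = 2 * Real.cosh (T a u) * Real.exp (∑ s' ∈ s, T s' u) := by
      intro u hu
      rw [Finset.sum_insert ha, Finset.sum_insert ha, hanti a hamem u hu]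
      have : ∑ s' ∈ s, T s' (φ a u) = ∑ s' ∈ s, T s' u :=
        Finset.sum_congr rfl fun s' hs' => hlow a hamem s' (hsmem s' hs') (hmax s' hs') u hu
      rw [this, Real.exp_add, Real.exp_add, Real.cosh_eq]
      ring
    have main : ∑ u ∈ U n, Real.exp (∑ s' ∈ insert a s, T s' u)
        ≤ Real.exp (w a ^ 2 / 2) * ∑ u ∈ U n, Real.exp (∑ s' ∈ s, T s' u) := by
      have h2 : (2 : ℝ) * ∑ u ∈ U n, Real.exp (∑ s' ∈ insert a s, T s' u)
          = ∑ u ∈ U n, 2 * Real.cosh (T a u) * Real.exp (∑ s' ∈ s, T s' u) := by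
        rw [two_mul]
        nth_rewrite 2 [← reidx (fun u => Real.exp (∑ s' ∈ insert a s, T s' u))]
        rw [← Finset.sum_add_distrib]
        exact Finset.sum_congr rfl key
      have hcosh : ∀ u ∈ U n, 2 * Real.cosh (T a u) * Real.exp (∑ s' ∈ s, T s' u)
          ≤ 2 * Real.exp (w a ^ 2 / 2) * Real.exp (∑ s' ∈ s, T s' u) := by
        intro u hu
        have h1 : Real.cosh (T a u) ≤ Real.cosh (w a) := by
          rw [Real.cosh_le_cosh, abs_of_nonneg hwa]
          exact hbdd a hamem u hu
        have h2' : Real.cosh (w a) ≤ Real.exp (w a ^ 2 / 2) := Real.cosh_le_exp_half_sq _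
        have := h1.trans h2'
        nlinarith [Real.exp_pos (∑ s' ∈ s, T s' u)]
      linarith [h2 ▸ Finset.sum_le_sum hcosh,
        (by linarith [Finset.sum_le_sum hcosh, h2] :
          2 * ∑ u ∈ U n, Real.exp (∑ s' ∈ insert a s, T s' u)
            ≤ ∑ u ∈ U n, 2 * Real.exp (w a ^ 2 / 2) * Real.exp (∑ s' ∈ s, T s' u)),
        (Finset.mul_sum (U n) (fun u => Real.exp (∑ s' ∈ s, T s' u))
          (2 * Real.exp (w a ^ 2 / 2))).symm]
    have ih' := ih (fun s' hs' => hmem s' (hsmem s' hs'))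
      (fun s' hs' => hinv s' (hsmem s' hs'))
      (fun s' hs' => hanti s' (hsmem s' hs'))
      (fun s' hs' s'' hs'' h => hlow s' (hsmem s' hs') s'' (hsmem s'' hs'') h)
      (fun s' hs' => hbdd s' (hsmem s' hs'))
    calc ∑ u ∈ U n, Real.exp (∑ s' ∈ insert a s, T s' u)
        ≤ Real.exp (w a ^ 2 / 2) * ∑ u ∈ U n, Real.exp (∑ s' ∈ s, T s' u) := main
      _ ≤ Real.exp (w a ^ 2 / 2) * ((U n).card * Real.exp (∑ s' ∈ s, w s' ^ 2 / 2)) := by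
          apply mul_le_mul_of_nonneg_left ih' (Real.exp_pos _).le
      _ = (U n).card * Real.exp (∑ s' ∈ insert a s, w s' ^ 2 / 2) := by
          rw [Finset.sum_insert ha, Real.exp_add]; ring


/-! ### Chernoff counting -/

lemma chern (n : ℕ) (F : (Fin 3 → ℕ) → ℝ) (lam θ B : ℝ) (hθ : 0 < θ)
    (hB : ∑ u ∈ U n, Real.exp (θ * F u) ≤ B) :
    (((U n).filter fun u => lam < F u).card : ℝ) ≤ Real.exp (-(θ * lam)) * B := by
  have h1 : (((U n).filter fun u => lam < F u).card : ℝ) * Real.exp (θ * lam)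
      ≤ ∑ u ∈ U n, Real.exp (θ * F u) := by
    have e1 : (((U n).filter fun u => lam < F u).card : ℝ) * Real.exp (θ * lam)
        = ∑ _u ∈ (U n).filter fun u => lam < F u, Real.exp (θ * lam) := by
      rw [Finset.sum_const, nsmul_eq_mul]
    rw [e1]
    calc ∑ u ∈ (U n).filter fun u => lam < F u, Real.exp (θ * lam)
        ≤ ∑ u ∈ (U n).filter fun u => lam < F u, Real.exp (θ * F u) := by
          apply Finset.sum_le_sum
          intro u hu
          have := (Finset.mem_filter.mp hu).2
          exact Real.exp_le_exp.mpr (by nlinarith)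
      _ ≤ ∑ u ∈ U n, Real.exp (θ * F u) :=
          Finset.sum_le_sum_of_subset_of_nonneg (Finset.filter_subset _ _)
            (fun u _ _ => (Real.exp_pos _).le)
  rw [Real.exp_neg, ← div_eq_inv_mul, le_div_iff₀ (Real.exp_pos _)]
  exact h1.trans hB

lemma tail (n : ℕ) (S : Finset ℕ) (T : ℕ → (Fin 3 → ℕ) → ℝ)
    (φ : ℕ → (Fin 3 → ℕ) → (Fin 3 → ℕ)) (w : ℕ → ℝ)
    (hmem : ∀ s ∈ S, ∀ u ∈ U n, φ s u ∈ U n)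
    (hinv : ∀ s ∈ S, ∀ u, φ s (φ s u) = u)
    (hanti : ∀ s ∈ S, ∀ u ∈ U n, T s (φ s u) = - T s u)
    (hlow : ∀ s ∈ S, ∀ s' ∈ S, s' < s → ∀ u ∈ U n, T s' (φ s u) = T s' u)
    (hbdd : ∀ s ∈ S, ∀ u ∈ U n, |T s u| ≤ w s)
    (lam θ V : ℝ) (hθ : 0 < θ) (hV : ∑ s ∈ S, w s ^ 2 ≤ V) :
    (((U n).filter fun u => lam < |∑ s ∈ S, T s u|).card : ℝ)
      ≤ 2 * (U n).card * Real.exp (θ ^ 2 * V / 2 - θ * lam) := by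
  classical
  have mgf : ∀ σ : ℝ, σ = 1 ∨ σ = -1 →
      ∑ u ∈ U n, Real.exp (θ * (σ * ∑ s ∈ S, T s u))
        ≤ (U n).card * Real.exp (θ ^ 2 * V / 2) := by
    intro σ hσ
    have habs : ∀ x : ℝ, |σ * x| = |x| := by
      intro x; rcases hσ with h | h <;> rw [h] <;> simp
    have hp := peel n S (fun s u => θ * (σ * T s u)) φ (fun s => θ * w s)
      hmem hinv
      (fun s hs u hu => by rw [hanti s hs u hu]; ring)
      (fun s hs s' hs' h u hu => by rw [hlow s hs s' hs' h u hu])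
      (fun s hs u hu => by
        rw [abs_mul, abs_of_pos hθ, habs]
        exact mul_le_mul_of_nonneg_left (hbdd s hs u hu) hθ.le)
    have e1 : ∀ u, θ * (σ * ∑ s ∈ S, T s u) = ∑ s ∈ S, θ * (σ * T s u) := by
      intro u; rw [Finset.mul_sum, Finset.mul_sum]
    have e2 : ∑ s ∈ S, (θ * w s) ^ 2 / 2 ≤ θ ^ 2 * V / 2 := by
      have : ∑ s ∈ S, (θ * w s) ^ 2 / 2 = θ ^ 2 * (∑ s ∈ S, w s ^ 2) / 2 := by
        rw [Finset.mul_sum, Finset.sum_div]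
        exact Finset.sum_congr rfl fun s _ => by ring
      rw [this]
      have hθ2 : (0:ℝ) ≤ θ ^ 2 := sq_nonneg θ
      nlinarith
    calc ∑ u ∈ U n, Real.exp (θ * (σ * ∑ s ∈ S, T s u))
        = ∑ u ∈ U n, Real.exp (∑ s ∈ S, θ * (σ * T s u)) := by
          exact Finset.sum_congr rfl fun u _ => by rw [e1]
      _ ≤ (U n).card * Real.exp (∑ s ∈ S, (θ * w s) ^ 2 / 2) := hp
      _ ≤ (U n).card * Real.exp (θ ^ 2 * V / 2) := by
          apply mul_le_mul_of_nonneg_left (Real.exp_le_exp.mpr e2) (Nat.cast_nonneg _)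
  have cpos := chern n (fun u => ∑ s ∈ S, T s u) lam θ _ hθ (by simpa using mgf 1 (Or.inl rfl))
  have cneg := chern n (fun u => -∑ s ∈ S, T s u) lam θ _ hθ (by
    have := mgf (-1) (Or.inr rfl)
    simpa using this)
  have hsub : ((U n).filter fun u => lam < |∑ s ∈ S, T s u|)
      ⊆ ((U n).filter fun u => lam < ∑ s ∈ S, T s u)
        ∪ ((U n).filter fun u => lam < -∑ s ∈ S, T s u) := by
    intro u hu
    rcases Finset.mem_filter.mp hu with ⟨h1, h2⟩
    rcases lt_abs.mp h2 with h | h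
    · exact Finset.mem_union_left _ (Finset.mem_filter.mpr ⟨h1, h⟩)
    · exact Finset.mem_union_right _ (Finset.mem_filter.mpr ⟨h1, h⟩)
  have hcard : (((U n).filter fun u => lam < |∑ s ∈ S, T s u|).card : ℝ)
      ≤ (((U n).filter fun u => lam < ∑ s ∈ S, T s u).card : ℝ)
        + (((U n).filter fun u => lam < -∑ s ∈ S, T s u).card : ℝ) := by
    have := (Finset.card_le_card hsub).trans (Finset.card_union_le _ _)
    exact_mod_cast this
  have efin : Real.exp (-(θ * lam)) * ((U n).card * Real.exp (θ ^ 2 * V / 2))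
      = (U n).card * Real.exp (θ ^ 2 * V / 2 - θ * lam) := by
    rw [sub_eq_add_neg, Real.exp_add]; ring
  calc (((U n).filter fun u => lam < |∑ s ∈ S, T s u|).card : ℝ)
      ≤ _ + _ := hcard
    _ ≤ Real.exp (-(θ * lam)) * ((U n).card * Real.exp (θ ^ 2 * V / 2))
        + Real.exp (-(θ * lam)) * ((U n).card * Real.exp (θ ^ 2 * V / 2)) :=
        add_le_add cpos cneg
    _ = 2 * (U n).card * Real.exp (θ ^ 2 * V / 2 - θ * lam) := by rw [efin]; ring


/-! ### `Hn` facts -/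

lemma mem_Hn {n : ℕ} {r : Fin 3 → ℕ} :
    r ∈ Hn n ↔ (∀ i, r i < n + 1) ∧ r 0 + r 1 + r 2 = n := by
  simp [Hn, Fin.sum_univ_three]

lemma Hn_le {n : ℕ} {r : Fin 3 → ℕ} (h : r ∈ Hn n) (i : Fin 3) : r i ≤ n := by
  have := (mem_Hn.mp h).1 i; omega

lemma Hn_unique {n : ℕ} {r r' : Fin 3 → ℕ} (h : r ∈ Hn n) (h' : r' ∈ Hn n)
    (h0 : r 0 = r' 0) (h1 : r 1 = r' 1) : r = r' := by
  have e := (mem_Hn.mp h).2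
  have e' := (mem_Hn.mp h').2
  funext i
  fin_cases i
  · exact h0
  · exact h1
  · show r 2 = r' 2
    omega

/-! ### The inner (2D) tail bound -/

lemma inner_tail (n : ℕ) (ε : ((Fin 3 → ℕ) × (Fin 3 → ℕ)) → ℝ)
    (hε : ∀ R, ε R = 1 ∨ ε R = -1)
    (A : Finset (Fin 3 → ℕ)) (hA : A ⊆ Hn n) (s : ℕ) (w θ : ℝ) (hθ : 0 < θ) :
    (((U n).filter fun u =>
        w < |∑ r ∈ A.filter fun r => r 0 = s, Yf n ε r u|).card : ℝ)
      ≤ 2 * (U n).card * Real.exp (θ ^ 2 * (n + 1) / 2 - θ * w) := by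
  classical
  set B := A.filter fun r => r 0 = s with hB
  have hBH : ∀ r ∈ B, r ∈ Hn n := fun r hr => hA (Finset.mem_filter.mp hr).1
  have hB0 : ∀ r ∈ B, r 0 = s := fun r hr => (Finset.mem_filter.mp hr).2
  set T : ℕ → (Fin 3 → ℕ) → ℝ := fun v u => ∑ r ∈ B.filter fun r => r 1 = v, Yf n ε r u
    with hT
  have hfib : ∀ u, ∑ v ∈ Finset.range (n + 1), T v u = ∑ r ∈ B, Yf n ε r u := by
    intro u
    exact Finset.sum_fiberwise_of_maps_to
      (fun r hr => Finset.mem_range.mpr (by have := Hn_le (hBH r hr) 1; omega)) _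
  have htail := tail n (Finset.range (n + 1)) T (fun v => flipU 1 (n - v)) (fun _ => 1)
    (fun v hv u hu => flipU_mem_U (by omega) hu)
    (fun v _ u => flipU_flipU _ _ _)
    (fun v hv u hu => by
      rw [hT]
      simp only []
      rw [← Finset.sum_neg_distrib]
      apply Finset.sum_congr rfl
      intro r hr
      have h1 : r 1 = v := (Finset.mem_filter.mp hr).2
      have h1n : r 1 ≤ n := Hn_le (hBH r (Finset.mem_filter.mp hr).1) 1
      rw [← h1]
      exact Yf_flip1_self h1n ε u)
    (fun v hv v' hv' hlt u hu => by
      rw [hT]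
      simp only []
      apply Finset.sum_congr rfl
      intro r hr
      have h1 : r 1 = v' := (Finset.mem_filter.mp hr).2
      have hvn : v ≤ n := by have := Finset.mem_range.mp hv; omega
      exact Yf_flip1_low (by omega) (by omega) ε u)
    (fun v hv u hu => by
      rw [hT]
      simp only []
      have hc : (B.filter fun r => r 1 = v).card ≤ 1 := by
        apply Finset.card_le_one.mpr
        intro r hr r' hr'
        have m1 := Finset.mem_filter.mp hr
        have m2 := Finset.mem_filter.mp hr'
        exact Hn_unique (hBH r m1.1) (hBH r' m2.1)
          ((hB0 r m1.1).trans (hB0 r' m2.1).symm) (m1.2.trans m2.2.symm)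
      calc |∑ r ∈ B.filter fun r => r 1 = v, Yf n ε r u|
          ≤ ∑ r ∈ B.filter fun r => r 1 = v, |Yf n ε r u| :=
            Finset.abs_sum_le_sum_abs _ _
        _ = ∑ r ∈ B.filter fun r => r 1 = v, 1 :=
            Finset.sum_congr rfl fun r _ => abs_Yf hε n r u
        _ ≤ 1 := by
            rw [Finset.sum_const, nsmul_eq_mul, mul_one]
            exact_mod_cast hc)
    w θ ((n : ℝ) + 1) hθ (by
      simp [Finset.sum_const, Finset.card_range])
  have : ((U n).filter fun u => w < |∑ r ∈ B, Yf n ε r u|)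
      = (U n).filter fun u => w < |∑ v ∈ Finset.range (n + 1), T v u| := by
    apply Finset.filter_congr
    intro u _
    rw [hfib]
  rw [hB] at this
  rw [this]
  exact htail


/-! ### The outer tail bound (for the truncated sum) -/

lemma outer_tail (n lo hi : ℕ) (ε : ((Fin 3 → ℕ) × (Fin 3 → ℕ)) → ℝ)
    (w lam θ V : ℝ) (hw : 0 ≤ w) (hθ : 0 < θ)
    (hV : ((hi - lo : ℕ) : ℝ) * w ^ 2 ≤ V) :
    (((U n).filter fun u =>
        lam < |∑ s ∈ Finset.range (n + 1), sg n 0 s u *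
          clip w (∑ r ∈ ((Hn n).filter fun r => lo ≤ r 0 ∧ r 0 < hi).filter
            fun r => r 0 = s, Yf n ε r u)|).card : ℝ)
      ≤ 2 * (U n).card * Real.exp (θ ^ 2 * V / 2 - θ * lam) := by
  classical
  set A := (Hn n).filter fun r => lo ≤ r 0 ∧ r 0 < hi with hAdef
  set T : ℕ → (Fin 3 → ℕ) → ℝ := fun s u =>
    sg n 0 s u * clip w (∑ r ∈ A.filter fun r => r 0 = s, Yf n ε r u) with hT
  set w' : ℕ → ℝ := fun s => if lo ≤ s ∧ s < hi then w else 0 with hw'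
  have hg_inv : ∀ s ∈ Finset.range (n + 1), ∀ s' , s' ≤ s → ∀ u,
      (∑ r ∈ A.filter fun r => r 0 = s', Yf n ε r (flipU 0 (n - s) u))
        = ∑ r ∈ A.filter fun r => r 0 = s', Yf n ε r u := by
    intro s hs s' hs' u
    apply Finset.sum_congr rfl
    intro r hr
    have h0 : r 0 = s' := (Finset.mem_filter.mp hr).2
    have hsn : s ≤ n := by have := Finset.mem_range.mp hs; omega
    exact Yf_flip0 (by omega) ε u
  have htail := tail n (Finset.range (n + 1)) T (fun s => flipU 0 (n - s)) w'
    (fun s hs u hu => flipU_mem_U (by omega) hu)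
    (fun s _ u => flipU_flipU _ _ _)
    (fun s hs u hu => by
      rw [hT]
      simp only []
      rw [hg_inv s hs s le_rfl u, sg_flip_self]
      ring)
    (fun s hs s' hs' hlt u hu => by
      rw [hT]
      simp only []
      have hsn : s ≤ n := by have := Finset.mem_range.mp hs; omega
      rw [hg_inv s hs s' hlt.le u, sg_flip_ne_bit (by omega)])
    (fun s hs u hu => by
      rw [hT, hw']
      simp only []
      by_cases hcase : lo ≤ s ∧ s < hi
      · rw [if_pos hcase, abs_mul, abs_sg, one_mul]
        exact abs_clip_le hw _
      · rw [if_neg hcase]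
        have hempty : A.filter (fun r => r 0 = s) = ∅ := by
          apply Finset.filter_eq_empty_iff.mpr
          intro r hr
          have := (Finset.mem_filter.mp hr).2
          intro h0
          exact hcase (by omega)
        rw [hempty]
        simp only [Finset.sum_empty]
        have : clip w 0 = 0 := by
          rw [clip, min_eq_left hw, max_eq_right (by linarith)]
        rw [this, mul_zero, abs_zero])
    lam θ V hθ (by
      rw [hw']
      have e1 : ∑ s ∈ Finset.range (n + 1), (if lo ≤ s ∧ s < hi then w else 0) ^ 2
          = ∑ s ∈ (Finset.range (n + 1)).filter (fun s => lo ≤ s ∧ s < hi), w ^ 2 := by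
        rw [Finset.sum_filter]
        apply Finset.sum_congr rfl
        intro s _
        split <;> simp
      rw [e1, Finset.sum_const, nsmul_eq_mul]
      have hcard : ((Finset.range (n + 1)).filter fun s => lo ≤ s ∧ s < hi).card
          ≤ hi - lo := by
        have hsub : ((Finset.range (n + 1)).filter fun s => lo ≤ s ∧ s < hi)
            ⊆ Finset.Ico lo hi := by
          intro x hx
          have := (Finset.mem_filter.mp hx).2
          exact Finset.mem_Ico.mpr this
        have := Finset.card_le_card hsub
        rwa [Nat.card_Ico] at this
      calc (((Finset.range (n + 1)).filter fun s => lo ≤ s ∧ s < hi).card : ℝ) * w ^ 2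
          ≤ ((hi - lo : ℕ) : ℝ) * w ^ 2 := by
            apply mul_le_mul_of_nonneg_right _ (sq_nonneg w)
            exact_mod_cast hcard
        _ ≤ V := hV)
  exact htail

/-! ### Decomposition of `F` into levels, and the good event -/

lemma F_decomp (n : ℕ) (ε : ((Fin 3 → ℕ) × (Fin 3 → ℕ)) → ℝ)
    (A : Finset (Fin 3 → ℕ)) (hA : A ⊆ Hn n) (u : Fin 3 → ℕ) :
    ∑ r ∈ A, Xf n ε r u
      = ∑ s ∈ Finset.range (n + 1), sg n 0 s u *
          (∑ r ∈ A.filter fun r => r 0 = s, Yf n ε r u) := by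
  classical
  have e := Finset.sum_fiberwise_of_maps_to (s := A) (t := Finset.range (n + 1))
    (g := fun r => r 0)
    (fun r hr => by
      show r 0 ∈ Finset.range (n + 1)
      have h1 := Hn_le (hA hr) 0
      exact Finset.mem_range.mpr (by omega))
    (fun r => Xf n ε r u)
  rw [← e]
  apply Finset.sum_congr rfl
  intro s _
  rw [Finset.mul_sum]
  apply Finset.sum_congr rfl
  intro r hr
  have h0 : r 0 = s := (Finset.mem_filter.mp hr).2
  rw [Xf, h0]

lemma good_event (n : ℕ) (ε : ((Fin 3 → ℕ) × (Fin 3 → ℕ)) → ℝ)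
    (A : Finset (Fin 3 → ℕ)) (hA : A ⊆ Hn n) (w : ℝ) (u : Fin 3 → ℕ)
    (h : ∀ s ∈ Finset.range (n + 1),
      |∑ r ∈ A.filter fun r => r 0 = s, Yf n ε r u| ≤ w) :
    ∑ r ∈ A, Xf n ε r u
      = ∑ s ∈ Finset.range (n + 1), sg n 0 s u *
          clip w (∑ r ∈ A.filter fun r => r 0 = s, Yf n ε r u) := by
  rw [F_decomp n ε A hA u]
  apply Finset.sum_congr rfl
  intro s hs
  rw [clip_of_abs_le (h s hs)]

/-! ### The per-block estimate -/

lemma block (n lo hi : ℕ) (ε : ((Fin 3 → ℕ) × (Fin 3 → ℕ)) → ℝ)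
    (hε : ∀ R, ε R = 1 ∨ ε R = -1) (lam w θ1 θ2 V : ℝ)
    (hw : 0 ≤ w) (hθ1 : 0 < θ1) (hθ2 : 0 < θ2)
    (hV : ((hi - lo : ℕ) : ℝ) * w ^ 2 ≤ V) :
    (((U n).filter fun u =>
        lam < |∑ r ∈ (Hn n).filter fun r => lo ≤ r 0 ∧ r 0 < hi, Xf n ε r u|).card : ℝ)
      ≤ ((n : ℝ) + 1) * (2 * (U n).card * Real.exp (θ1 ^ 2 * (n + 1) / 2 - θ1 * w))
        + 2 * (U n).card * Real.exp (θ2 ^ 2 * V / 2 - θ2 * lam) := by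
  classical
  set A := (Hn n).filter fun r => lo ≤ r 0 ∧ r 0 < hi with hAdef
  have hA : A ⊆ Hn n := Finset.filter_subset _ _
  -- union bound
  have hsub : ((U n).filter fun u => lam < |∑ r ∈ A, Xf n ε r u|)
      ⊆ ((Finset.range (n + 1)).biUnion fun s => (U n).filter fun u =>
          w < |∑ r ∈ A.filter fun r => r 0 = s, Yf n ε r u|)
        ∪ ((U n).filter fun u =>
            lam < |∑ s ∈ Finset.range (n + 1), sg n 0 s u *
              clip w (∑ r ∈ A.filter fun r => r 0 = s, Yf n ε r u)|) := by
    intro u hu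
    rcases Finset.mem_filter.mp hu with ⟨huU, hlam⟩
    by_cases hgood : ∀ s ∈ Finset.range (n + 1),
        |∑ r ∈ A.filter fun r => r 0 = s, Yf n ε r u| ≤ w
    · apply Finset.mem_union_right
      apply Finset.mem_filter.mpr
      refine ⟨huU, ?_⟩
      rw [← good_event n ε A hA w u hgood]
      exact hlam
    · apply Finset.mem_union_left
      push_neg at hgood
      obtain ⟨s, hs, hws⟩ := hgood
      apply Finset.mem_biUnion.mpr
      exact ⟨s, hs, Finset.mem_filter.mpr ⟨huU, hws⟩⟩
  have hcard := Finset.card_le_card hsub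
  have hcard2 := (Finset.card_union_le
      ((Finset.range (n + 1)).biUnion fun s => (U n).filter fun u =>
          w < |∑ r ∈ A.filter fun r => r 0 = s, Yf n ε r u|)
      ((U n).filter fun u =>
          lam < |∑ s ∈ Finset.range (n + 1), sg n 0 s u *
            clip w (∑ r ∈ A.filter fun r => r 0 = s, Yf n ε r u)|)).trans
    (Nat.add_le_add_right (Finset.card_biUnion_le (s := Finset.range (n + 1))
      (t := fun s => (U n).filter fun u =>
        w < |∑ r ∈ A.filter fun r => r 0 = s, Yf n ε r u|)) _)
  have hchain : (((U n).filter fun u => lam < |∑ r ∈ A, Xf n ε r u|).card : ℝ)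
      ≤ (∑ s ∈ Finset.range (n + 1), (((U n).filter fun u =>
          w < |∑ r ∈ A.filter fun r => r 0 = s, Yf n ε r u|).card : ℝ))
        + (((U n).filter fun u =>
            lam < |∑ s ∈ Finset.range (n + 1), sg n 0 s u *
              clip w (∑ r ∈ A.filter fun r => r 0 = s, Yf n ε r u)|).card : ℝ) := by
    have := hcard.trans hcard2
    push_cast
    exact_mod_cast this
  apply hchain.trans
  have hin : ∀ s ∈ Finset.range (n + 1), (((U n).filter fun u =>
      w < |∑ r ∈ A.filter fun r => r 0 = s, Yf n ε r u|).card : ℝ)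
      ≤ 2 * (U n).card * Real.exp (θ1 ^ 2 * (n + 1) / 2 - θ1 * w) :=
    fun s _ => inner_tail n ε hε A hA s w θ1 hθ1
  have hout := outer_tail n lo hi ε w lam θ2 V hw hθ2 hV
  have h1 : ∑ s ∈ Finset.range (n + 1), (((U n).filter fun u =>
      w < |∑ r ∈ A.filter fun r => r 0 = s, Yf n ε r u|).card : ℝ)
      ≤ ((n : ℝ) + 1) * (2 * (U n).card * Real.exp (θ1 ^ 2 * (n + 1) / 2 - θ1 * w)) := by
    calc ∑ s ∈ Finset.range (n + 1), (((U n).filter fun u =>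
        w < |∑ r ∈ A.filter fun r => r 0 = s, Yf n ε r u|).card : ℝ)
        ≤ ∑ _s ∈ Finset.range (n + 1),
            2 * (U n).card * Real.exp (θ1 ^ 2 * (n + 1) / 2 - θ1 * w) :=
          Finset.sum_le_sum hin
      _ = ((n : ℝ) + 1) * (2 * (U n).card * Real.exp (θ1 ^ 2 * (n + 1) / 2 - θ1 * w)) := by
          rw [Finset.sum_const, nsmul_eq_mul, Finset.card_range]
          push_cast
          ring
  exact add_le_add h1 hout


/-! ### Haar functions on dyadic boxes -/

lemma haar_box {n k j u : ℕ} (hk : k ≤ n) (hj : j < 2 ^ k) (hu : u < 2 ^ (n + 1)) {x : ℝ}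
    (hx1 : (u : ℝ) / 2 ^ (n + 1) ≤ x) (hx2 : x < ((u : ℝ) + 1) / 2 ^ (n + 1)) :
    haar1 k j x = if u / 2 ^ (n + 1 - k) = j
      then (if u.testBit (n - k) then (1 : ℝ) else -1) else 0 := by
  set p : ℕ := n + 1 - k with hpdef
  have hp : 1 ≤ p := by omega
  set Q : ℕ := 2 ^ (p - 1) with hQdef
  have hQpos : 0 < Q := Nat.pow_pos (by norm_num)
  have h2p : 2 ^ p = 2 * Q := by
    rw [hQdef, ← pow_succ']
    congr 1
    omega
  set j' : ℕ := u / 2 ^ p with hj'def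
  set m : ℕ := u % 2 ^ p with hmdef
  have hum : 2 ^ p * j' + m = u := Nat.div_add_mod u (2 ^ p)
  have hmlt : m < 2 ^ p := Nat.mod_lt _ (Nat.pow_pos (by norm_num))
  have hj'lt : j' < 2 ^ k := by
    rw [hj'def]
    apply Nat.div_lt_of_lt_mul
    calc u < 2 ^ (n + 1) := hu
      _ = 2 ^ p * 2 ^ k := by rw [← pow_add]; congr 1; omega
  -- the test bit
  have hbit : u.testBit (n - k) = decide (Q ≤ m) := by
    have hnk : n - k = p - 1 := by omega
    have hudiv : u / Q = m / Q + 2 * j' := by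
      have hlin : 2 ^ p * j' = 2 * j' * Q := by rw [h2p]; ring
      have : u = m + 2 * j' * Q := by omega
      rw [this, Nat.add_mul_div_right _ _ hQpos]
    have hd01 : m / Q ≤ 1 := by
      have hm2 : m < 2 * Q := by omega
      have := (Nat.div_lt_iff_lt_mul hQpos).mpr (by omega : m < 2 * Q)
      omega
    have hdiff : m / Q = 1 ↔ Q ≤ m := by
      constructor
      · intro h
        have h2 := Nat.div_add_mod m Q
        rw [h, mul_one] at h2
        omega
      · intro h
        have := Nat.div_le_div_right (c := Q) h
        rw [Nat.div_self hQpos] at this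
        omega
    rw [hnk, Nat.testBit_eq_decide_div_mod_eq, hudiv]
    have hpar : (m / Q + 2 * j') % 2 = m / Q := by
      rcases Nat.le_one_iff_eq_zero_or_eq_one.mp hd01 with h | h <;> rw [h] <;> omega
    rw [hpar]
    exact decide_eq_decide.mpr hdiff
  -- real boundary identities
  have hD : (0:ℝ) < 2 ^ (n + 1) := by positivity
  have hd : (0:ℝ) < 2 ^ k := by positivity
  have hkp : k + p = n + 1 := by omega
  have hpow : (2:ℝ) ^ k * (2:ℝ) ^ p = 2 ^ (n + 1) := by rw [← pow_add, hkp]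
  have hpow2 : ((2:ℝ)) ^ p = 2 * (2:ℝ) ^ (p - 1) := by
    rw [← pow_succ']
    congr 1
    omega
  have hge : ∀ N : ℕ, N ≤ u → (N : ℝ) / 2 ^ (n + 1) ≤ x := by
    intro N hN
    refine le_trans ((div_le_div_iff_of_pos_right hD).mpr ?_) hx1
    exact_mod_cast hN
  have hlt : ∀ N : ℕ, u < N → x < (N : ℝ) / 2 ^ (n + 1) := by
    intro N hN
    refine hx2.trans_le ((div_le_div_iff_of_pos_right hD).mpr ?_)
    have : (u : ℝ) + 1 ≤ N := by exact_mod_cast hN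
    linarith
  have eq1 : ∀ jj : ℕ, (jj : ℝ) / 2 ^ k = ((jj * 2 ^ p : ℕ) : ℝ) / 2 ^ (n + 1) := by
    intro jj
    rw [div_eq_div_iff hd.ne' hD.ne']
    push_cast
    rw [← hpow]
    ring
  have eq2 : ∀ jj : ℕ, ((jj : ℝ) + 1 / 2) / 2 ^ k
      = ((jj * 2 ^ p + Q : ℕ) : ℝ) / 2 ^ (n + 1) := by
    intro jj
    rw [hQdef, div_eq_div_iff hd.ne' hD.ne']
    push_cast
    rw [← hpow, hpow2]
    ring
  have eq3 : ∀ jj : ℕ, ((jj : ℝ) + 1) / 2 ^ k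
      = (((jj + 1) * 2 ^ p : ℕ) : ℝ) / 2 ^ (n + 1) := by
    intro jj
    rw [div_eq_div_iff hd.ne' hD.ne']
    push_cast
    rw [← hpow]
    ring
  by_cases hjj : u / 2 ^ p = j
  · -- x is in the dyadic interval of level k and position j
    have hj'j : j' = j := hjj
    have hueq : u = j * 2 ^ p + m := by rw [← hj'j, mul_comm]; omega
    have hj1 : (j + 1) * 2 ^ p = j * 2 ^ p + 2 ^ p := by ring
    rw [if_pos hjj, hbit]
    by_cases hbc : Q ≤ m
    · -- right half
      rw [decide_eq_true hbc]
      simp only [if_true]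
      have hcond2a : ((j : ℝ) + 1 / 2) / 2 ^ k ≤ x := by
        rw [eq2 j]; apply hge; omega
      have hcond2b : x < ((j : ℝ) + 1) / 2 ^ k := by
        rw [eq3 j]; apply hlt; omega
      rw [haar1, if_neg (fun h => absurd h.2 (not_lt.mpr hcond2a)), if_pos ⟨hcond2a, hcond2b⟩]
    · -- left half
      rw [decide_eq_false hbc]
      simp only [Bool.false_eq_true, if_false]
      have hcond1a : (j : ℝ) / 2 ^ k ≤ x := by
        rw [eq1 j]; apply hge; omega
      have hcond1b : x < ((j : ℝ) + 1 / 2) / 2 ^ k := by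
        rw [eq2 j]; apply hlt; omega
      rw [haar1, if_pos ⟨hcond1a, hcond1b⟩]
  · -- x is outside the dyadic interval of level k and position j
    rw [if_neg hjj]
    have hj'j : j' ≠ j := hjj
    rcases Nat.lt_or_ge j j' with hc | hc
    · -- j < j' : x lies to the right of the whole interval
      have hA : 2 ^ p * (j + 1) ≤ 2 ^ p * j' := Nat.mul_le_mul_left _ hc
      have hB : (j + 1) * 2 ^ p = 2 ^ p * (j + 1) := by ring
      have hC : j * 2 ^ p + 2 ^ p = 2 ^ p * (j + 1) := by ring
      have hup : ((j : ℝ) + 1 / 2) / 2 ^ k ≤ x := by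
        rw [eq2 j]; apply hge; omega
      have hup2 : ((j : ℝ) + 1) / 2 ^ k ≤ x := by
        rw [eq3 j]; apply hge; omega
      rw [haar1, if_neg (fun h => absurd h.2 (not_lt.mpr hup)),
        if_neg (fun h => absurd h.2 (not_lt.mpr hup2))]
    · -- j' < j : x lies to the left of the whole interval
      have hj'lt' : j' < j := by omega
      have hA : 2 ^ p * (j' + 1) ≤ 2 ^ p * j := Nat.mul_le_mul_left _ hj'lt'
      have hB : 2 ^ p * (j' + 1) = 2 ^ p * j' + 2 ^ p := by ring
      have hC : j * 2 ^ p = 2 ^ p * j := by ring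
      have hdown : x < (j : ℝ) / 2 ^ k := by
        rw [eq1 j]; apply hlt; omega
      have hdown2 : x < ((j : ℝ) + 1 / 2) / 2 ^ k := by
        rw [eq2 j]; apply hlt; omega
      rw [haar1, if_neg (fun h => absurd h.1 (not_le.mpr hdown)),
        if_neg (fun h => absurd h.1 (not_le.mpr hdown2))]


lemma haar1_one {k j : ℕ} (hj : j < 2 ^ k) : haar1 k j 1 = 0 := by
  have hd : (0:ℝ) < 2 ^ k := by positivity
  have h1 : ((j : ℝ) + 1) / 2 ^ k ≤ 1 := by
    rw [div_le_one hd]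
    exact_mod_cast Nat.succ_le_of_lt hj
  have h2 : ((j : ℝ) + 1 / 2) / 2 ^ k ≤ 1 := by
    refine le_trans ?_ h1
    gcongr
    norm_num
  rw [haar1, if_neg (fun h => absurd h.2 (not_lt.mpr h2)),
    if_neg (fun h => absurd h.2 (not_lt.mpr h1))]

lemma rfun_box {n : ℕ} (ε : ((Fin 3 → ℕ) × (Fin 3 → ℕ)) → ℝ) {r u : Fin 3 → ℕ}
    (hr : r ∈ Hn n) (hu : u ∈ U n) {x : Fin 3 → ℝ}
    (hx : ∀ i, (u i : ℝ) / 2 ^ (n + 1) ≤ x i ∧ x i < ((u i : ℝ) + 1) / 2 ^ (n + 1)) :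
    rfun ε r x = Xf n ε r u := by
  classical
  have hrle : ∀ i, r i ≤ n := Hn_le hr
  have hulf : ∀ i, u i < 2 ^ (n + 1) := mem_U.mp hu
  have hJlt : ∀ i, Jp n r u i < 2 ^ r i := by
    intro i
    show u i / 2 ^ (n + 1 - r i) < 2 ^ r i
    apply Nat.div_lt_of_lt_mul
    calc u i < 2 ^ (n + 1) := hulf i
      _ = 2 ^ (n + 1 - r i) * 2 ^ r i := by rw [← pow_add]; congr 1; have := hrle i; omega
  have hJmem : Jp n r u ∈ Fintype.piFinset (fun i => Finset.range (2 ^ r i)) := by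
    rw [Fintype.mem_piFinset]
    intro i
    exact Finset.mem_range.mpr (hJlt i)
  rw [rfun, Finset.sum_eq_single (Jp n r u)]
  · -- the surviving term
    have hprod : ∀ i : Fin 3, haar1 (r i) (Jp n r u i) (x i) = sg n i (r i) u := by
      intro i
      have hcondeq : u i / 2 ^ (n + 1 - r i) = Jp n r u i := rfl
      rw [haar_box (hrle i) (hJlt i) (hulf i) (hx i).1 (hx i).2, if_pos hcondeq]
      rfl
    calc ε (r, Jp n r u) * haarR (r, Jp n r u) x
        = ε (r, Jp n r u) * ∏ i, sg n i (r i) u := by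
          rw [haarR]
          congr 1
          exact Finset.prod_congr rfl fun i _ => hprod i
      _ = Xf n ε r u := by
          rw [Fin.prod_univ_three, Xf, Yf]
          ring
  · intro j hjmem hne
    have hex : ∃ i, j i ≠ Jp n r u i := by
      by_contra h
      push_neg at h
      exact hne (funext h)
    obtain ⟨i, hi⟩ := hex
    have hji : j i < 2 ^ r i := by
      rw [Fintype.mem_piFinset] at hjmem
      exact Finset.mem_range.mp (hjmem i)
    have hzero : haar1 (r i) (j i) (x i) = 0 := by
      rw [haar_box (hrle i) hji (hulf i) (hx i).1 (hx i).2, if_neg (fun h => hi h.symm)]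
    rw [haarR, Finset.prod_eq_zero (Finset.mem_univ i) hzero, mul_zero]
  · intro h
    exact absurd hJmem h


/-! ### Boxes and volumes -/

def box (n : ℕ) (u : Fin 3 → ℕ) : Set (Fin 3 → ℝ) :=
  Set.univ.pi fun i => Set.Ico ((u i : ℝ) / 2 ^ (n + 1)) (((u i : ℝ) + 1) / 2 ^ (n + 1))

lemma volume_box (n : ℕ) (u : Fin 3 → ℕ) :
    volume (box n u) = (ENNReal.ofReal ((2 ^ (n + 1) : ℝ)⁻¹)) ^ 3 := by
  rw [box, volume_pi_pi]
  have h : ∀ i : Fin 3, volume (Set.Ico ((u i : ℝ) / 2 ^ (n + 1))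
      (((u i : ℝ) + 1) / 2 ^ (n + 1))) = ENNReal.ofReal ((2 ^ (n + 1) : ℝ)⁻¹) := by
    intro i
    rw [Real.volume_Ico]
    congr 1
    field_simp
    ring
  rw [Finset.prod_congr rfl fun i _ => h i, Finset.prod_const]
  simp

/-- The set where the Riesz product is negative is covered by the bad boxes. -/
lemma cover (n q' : ℕ) (m : ℕ → ℕ) (ε : ((Fin 3 → ℕ) × (Fin 3 → ℕ)) → ℝ) (ρ : ℝ) :
    {x ∈ unitCube 3 |
      (∏ t ∈ Finset.Icc 1 q', (1 + ρ * ∑ r ∈ Apart n m t, rfun ε r x)) < 0}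
    ⊆ ⋃ u ∈ ((U n).filter fun u =>
        (∏ t ∈ Finset.Icc 1 q', (1 + ρ * ∑ r ∈ Apart n m t, Xf n ε r u)) < 0), box n u := by
  classical
  intro x hx
  obtain ⟨hxC, hxneg⟩ := hx
  rw [unitCube, Set.mem_pi] at hxC
  by_cases hone : ∃ i, x i = 1
  · exfalso
    obtain ⟨i0, hi0⟩ := hone
    have hzero : ∀ t ∈ Finset.Icc 1 q', ∑ r ∈ Apart n m t, rfun ε r x = 0 := by
      intro t _
      apply Finset.sum_eq_zero
      intro r _
      rw [rfun]
      apply Finset.sum_eq_zero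
      intro j hj
      have hji : j i0 < 2 ^ r i0 := by
        rw [Fintype.mem_piFinset] at hj
        exact Finset.mem_range.mp (hj i0)
      rw [haarR, Finset.prod_eq_zero (Finset.mem_univ i0) (by rw [hi0]; exact haar1_one hji),
        mul_zero]
    have hone' : ∏ t ∈ Finset.Icc 1 q', (1 + ρ * ∑ r ∈ Apart n m t, rfun ε r x) = 1 :=
      Finset.prod_eq_one fun t ht => by rw [hzero t ht, mul_zero, add_zero]
    rw [hone'] at hxneg
    linarith
  · push_neg at hone
    have hD : (0:ℝ) < 2 ^ (n + 1) := by positivity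
    have hx01 : ∀ i, 0 ≤ x i ∧ x i < 1 := fun i =>
      ⟨(hxC i (Set.mem_univ i)).1,
        lt_of_le_of_ne (hxC i (Set.mem_univ i)).2 (hone i)⟩
    set u : Fin 3 → ℕ := fun i => ⌊x i * 2 ^ (n + 1)⌋₊ with hudef
    have hbox : ∀ i, (u i : ℝ) / 2 ^ (n + 1) ≤ x i ∧ x i < ((u i : ℝ) + 1) / 2 ^ (n + 1) := by
      intro i
      simp only [hudef]
      constructor
      · rw [div_le_iff₀ hD]
        exact Nat.floor_le (mul_nonneg (hx01 i).1 hD.le)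
      · rw [lt_div_iff₀ hD]
        exact_mod_cast Nat.lt_floor_add_one (x i * 2 ^ (n + 1))
    have huU : u ∈ U n := by
      rw [mem_U]
      intro i
      have hlt' : x i * 2 ^ (n + 1) < ((2 ^ (n + 1) : ℕ) : ℝ) := by
        push_cast
        nlinarith [(hx01 i).1, (hx01 i).2, hD]
      exact Nat.floor_lt (mul_nonneg (hx01 i).1 hD.le) |>.mpr hlt'
    have hsame : ∀ t ∈ Finset.Icc 1 q',
        ∑ r ∈ Apart n m t, rfun ε r x = ∑ r ∈ Apart n m t, Xf n ε r u := by
      intro t _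
      apply Finset.sum_congr rfl
      intro r hr
      exact rfun_box ε (Finset.mem_filter.mp hr).1 huU hbox
    apply Set.mem_biUnion
    · apply Finset.mem_coe.mpr
      apply Finset.mem_filter.mpr
      refine ⟨huU, ?_⟩
      have heq : (∏ t ∈ Finset.Icc 1 q', (1 + ρ * ∑ r ∈ Apart n m t, Xf n ε r u))
          = ∏ t ∈ Finset.Icc 1 q', (1 + ρ * ∑ r ∈ Apart n m t, rfun ε r x) :=
        Finset.prod_congr rfl fun t ht => by rw [hsame t ht]
      rw [heq]
      exact hxneg
    · rw [box, Set.mem_pi]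
      intro i _
      exact Set.mem_Ico.mpr (hbox i)

end RPdev

open RPdev in
set_option maxHeartbeats 2000000 in
/-- **Lemma 6.1, estimate (6.5): the Riesz product is negative only on a small set.**
With `b = 1/6`, `q = ⌈a n^ε⌉`, `ρ̃ = a q^b / n`, and `Ψ = ∏_{t=1}^q (1 + ρ̃ F_t)`, the
measure of `{Ψ < 0}` is at most `C q exp(−c a⁻¹ q^(1/2 − b))` (note `1/2 − b = 1/3`).
The partition `I_1 < ⋯ < I_q` of `{0, …, n}` is encoded by its boundaries
`m 0 = 0 < m 1 < ⋯ < m q = n + 1`, each block having at most `2(n+1)/q` elements. -/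
theorem riesz_product_rarely_negative :
    ∃ ε₀ C c : ℝ, 0 < ε₀ ∧ ε₀ < 1 ∧ 0 < C ∧ 0 < c ∧
      ∀ e : ℝ, 0 < e → e ≤ ε₀ → ∀ a : ℝ, 0 < a → a < 1 →
        ∃ N₀ : ℕ, ∀ n : ℕ, N₀ ≤ n →
          ∀ q : ℕ, q = ⌈a * (n : ℝ) ^ e⌉₊ →
            ∀ m : ℕ → ℕ, m 0 = 0 → m q = n + 1 → (∀ t < q, m t < m (t + 1)) →
              (∀ t < q, ((m (t + 1) - m t : ℕ) : ℝ) ≤ 2 * ((n : ℝ) + 1) / q) →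
              ∀ ε : ((Fin 3 → ℕ) × (Fin 3 → ℕ)) → ℝ, (∀ R, ε R = 1 ∨ ε R = -1) →
                volume {x ∈ unitCube 3 |
                    (∏ t ∈ Finset.Icc 1 q,
                      (1 + (a * (q : ℝ) ^ ((1 : ℝ) / 6) / n) *
                        ∑ r ∈ Apart n m t, rfun ε r x)) < 0} ≤
                  ENNReal.ofReal
                    (C * q * Real.exp (-c * a⁻¹ * (q : ℝ) ^ ((1 : ℝ) / 3))) := by
  classical
  refine ⟨1/2, 1, 1/32, by norm_num, by norm_num, by norm_num, by norm_num, ?_⟩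
  intro e he he2 a ha ha2
  have h13pos : (0:ℝ) < a ^ ((1:ℝ)/3) := Real.rpow_pos_of_pos ha _
  set d : ℝ := e / 3 with hd
  have hdpos : 0 < d := by rw [hd]; positivity
  set c' : ℝ := a ^ ((1:ℝ)/3) / 32 with hc'
  have hc'pos : 0 < c' := by rw [hc']; positivity
  set M : ℕ := ⌈(6:ℝ) / e⌉₊ with hM
  have hMr : (6:ℝ) / e ≤ M := Nat.le_ceil _
  have hMpos : 0 < M := by rw [hM]; exact Nat.ceil_pos.mpr (by positivity)
  have hMR : (0:ℝ) < M := by exact_mod_cast hMpos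
  set γ : ℝ := (c' / M) ^ M with hγ
  have hγpos : 0 < γ := pow_pos (div_pos hc'pos hMR) M
  refine ⟨max 1 ⌈(6:ℝ)/γ⌉₊, ?_⟩
  intro n hn q hq m hm0 hmq hmlt hmcard ε hε
  have hn1 : 1 ≤ n := le_trans (le_max_left _ _) hn
  have hnR : (1:ℝ) ≤ (n:ℝ) := by exact_mod_cast hn1
  have hnpos : (0:ℝ) < n := by linarith
  have hnγ : (6:ℝ)/γ ≤ (n:ℝ) := by
    have h1 : ((⌈(6:ℝ)/γ⌉₊ : ℕ) : ℝ) ≤ n := by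
      exact_mod_cast le_trans (le_max_right _ _) hn
    exact le_trans (Nat.le_ceil _) h1
  have hq1 : 1 ≤ q := by
    rw [hq]
    exact Nat.ceil_pos.mpr (mul_pos ha (Real.rpow_pos_of_pos hnpos e))
  set Q : ℝ := (q:ℝ) with hQ
  have hQ1 : (1:ℝ) ≤ Q := by rw [hQ]; exact_mod_cast hq1
  have hQpos : (0:ℝ) < Q := by linarith
  set Y : ℝ := Q ^ ((1:ℝ)/6) with hY
  have hYpos : 0 < Y := Real.rpow_pos_of_pos hQpos _
  set K : ℝ := a⁻¹ * Q ^ ((1:ℝ)/3) with hK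
  have hX : Q ^ ((1:ℝ)/3) = Y ^ 2 := by
    rw [hY, ← Real.rpow_natCast (Q ^ ((1:ℝ)/6)) 2, ← Real.rpow_mul hQpos.le]
    norm_num
  have hKpos : 0 < K := by
    rw [hK]
    exact mul_pos (inv_pos.mpr ha) (Real.rpow_pos_of_pos hQpos _)
  have hY6 : Y ^ 6 = Q := by
    rw [hY, ← Real.rpow_natCast (Q ^ ((1:ℝ)/6)) 6, ← Real.rpow_mul hQpos.le]
    norm_num
  set w : ℝ := Real.sqrt (((n:ℝ) + 1) * K) with hw
  have hwpos : 0 < w := Real.sqrt_pos.mpr (by positivity)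
  have hw2 : w ^ 2 = ((n:ℝ) + 1) * K := Real.sq_sqrt (by positivity)
  set θ1 : ℝ := w / ((n:ℝ) + 1) with hθ1def
  have hθ1 : 0 < θ1 := by rw [hθ1def]; positivity
  set ρ : ℝ := a * Y / (n:ℝ) with hρ
  have hρpos : 0 < ρ := by rw [hρ]; positivity
  set lam : ℝ := ρ⁻¹ with hlam
  have hlampos : 0 < lam := inv_pos.mpr hρpos
  set Vm : ℝ := 2 * ((n:ℝ) + 1) ^ 2 * K / Q with hVm
  have hVmpos : 0 < Vm := by rw [hVm]; positivity
  set θ2 : ℝ := lam / Vm with hθ2def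
  have hθ2 : 0 < θ2 := by rw [hθ2def]; positivity
  clear_value θ2 Vm lam ρ θ1 w K Y Q γ M c' d
  -- exponent computations
  have hne : ((n:ℝ) + 1) ≠ 0 := by positivity
  have hth1 : θ1 * ((n:ℝ) + 1) = w := by
    rw [hθ1def, div_mul_cancel₀ _ hne]
  have hth1w : θ1 * w = K := by
    have hc : θ1 * w * ((n:ℝ)+1) = K * ((n:ℝ)+1) := by
      calc θ1 * w * ((n:ℝ)+1) = w * (θ1 * ((n:ℝ)+1)) := by ring
        _ = w * w := by rw [hth1]
        _ = ((n:ℝ)+1) * K := by rw [← hw2]; ring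
        _ = K * ((n:ℝ)+1) := by ring
    exact mul_right_cancel₀ hne hc
  have hE1 : θ1 ^ 2 * ((n:ℝ) + 1) / 2 - θ1 * w = -(K / 2) := by
    have hsq : θ1 ^ 2 * ((n:ℝ) + 1) = K := by
      calc θ1 ^ 2 * ((n:ℝ)+1) = θ1 * (θ1 * ((n:ℝ)+1)) := by ring
        _ = θ1 * w := by rw [hth1]
        _ = K := hth1w
    linarith [hsq, hth1w]
  have hE2 : θ2 ^ 2 * Vm / 2 - θ2 * lam ≤ -(K / 16) := by
    have hE2eq : θ2 ^ 2 * Vm / 2 - θ2 * lam = -(lam ^ 2 / (2 * Vm)) := by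
      rw [hθ2def]
      field_simp
      ring
    have hlam2 : lam ^ 2 / (2 * Vm) = (n:ℝ)^2 * Y^2 / (4 * a * ((n:ℝ)+1)^2) := by
      rw [hlam, hρ, inv_div, hVm, hK, hX, ← hY6]
      field_simp
      ring
    have key : a⁻¹ * Y^2 / 16 ≤ (n:ℝ)^2 * Y^2 / (4*a*((n:ℝ)+1)^2) := by
      rw [div_le_div_iff₀ (by norm_num) (by positivity)]
      have hainv : a⁻¹ * a = 1 := inv_mul_cancel₀ ha.ne'
      have h1 : ((n:ℝ)+1)^2 ≤ (2*(n:ℝ))^2 := by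
        apply pow_le_pow_left₀ (by positivity) (by linarith)
      calc a⁻¹ * Y^2 * (4*a*((n:ℝ)+1)^2) = 4*Y^2*((n:ℝ)+1)^2*(a⁻¹*a) := by ring
        _ = 4*Y^2*((n:ℝ)+1)^2 := by rw [hainv, mul_one]
        _ ≤ 4*Y^2*(2*(n:ℝ))^2 := mul_le_mul_of_nonneg_left h1 (by positivity)
        _ = (n:ℝ)^2*Y^2*16 := by ring
    calc θ2 ^ 2 * Vm / 2 - θ2 * lam = -(lam ^ 2 / (2 * Vm)) := hE2eq
      _ ≤ -(K/16) := by
          rw [hlam2]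
          apply neg_le_neg
          rw [hK, hX]
          exact key
  -- the per block estimate
  have hper : ∀ t ∈ Finset.Icc 1 q,
      (((U n).filter fun u => lam < |∑ r ∈ Apart n m t, Xf n ε r u|).card : ℝ)
        ≤ ((n:ℝ) + 1) * (2 * (U n).card * Real.exp (-(K/2)))
          + 2 * (U n).card * Real.exp (-(K/16)) := by
    intro t ht
    obtain ⟨ht1, ht2⟩ := Finset.mem_Icc.mp ht
    have hVt : ((m t - m (t - 1) : ℕ) : ℝ) * w ^ 2 ≤ Vm := by
      have h1 := hmcard (t - 1) (by omega)
      have h2 : t - 1 + 1 = t := by omega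
      rw [h2] at h1
      calc ((m t - m (t - 1) : ℕ) : ℝ) * w ^ 2
          ≤ (2 * ((n:ℝ)+1)/Q) * w ^ 2 :=
            mul_le_mul_of_nonneg_right h1 (sq_nonneg w)
        _ = Vm := by rw [hw2, hVm]; field_simp
    have hb := block n (m (t-1)) (m t) ε hε lam w θ1 θ2 Vm hwpos.le hθ1 hθ2 hVt
    have hAe : Apart n m t = (Hn n).filter fun r => m (t - 1) ≤ r 0 ∧ r 0 < m t := rfl
    rw [hAe]
    refine le_trans hb (add_le_add ?_ ?_)
    · rw [hE1]
    · exact mul_le_mul_of_nonneg_left (Real.exp_le_exp.mpr hE2) (by positivity)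
  -- bad boxes
  set Bad := (U n).filter (fun u =>
    (∏ t ∈ Finset.Icc 1 q, (1 + ρ * ∑ r ∈ Apart n m t, Xf n ε r u)) < 0) with hBadDef
  have hBadsub : Bad ⊆ (Finset.Icc 1 q).biUnion (fun t =>
      (U n).filter fun u => lam < |∑ r ∈ Apart n m t, Xf n ε r u|) := by
    intro u hu
    obtain ⟨huU, hneg⟩ := Finset.mem_filter.mp hu
    have hex : ∃ t ∈ Finset.Icc 1 q, 1 + ρ * ∑ r ∈ Apart n m t, Xf n ε r u < 0 := by
      by_contra hcon
      push_neg at hcon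
      exact absurd hneg (not_lt.mpr (Finset.prod_nonneg hcon))
    obtain ⟨t, ht, hfac⟩ := hex
    apply Finset.mem_biUnion.mpr
    refine ⟨t, ht, Finset.mem_filter.mpr ⟨huU, ?_⟩⟩
    apply lt_abs.mpr
    right
    have h2 : ρ * lam = 1 := by rw [hlam]; exact mul_inv_cancel₀ hρpos.ne'
    set F := ∑ r ∈ Apart n m t, Xf n ε r u with hF
    have h3 : ρ * (F + lam) < 0 := by
      have heq : ρ * (F + lam) = ρ * F + ρ * lam := by ring
      rw [heq, h2]
      linarith
    have h4 : F + lam < 0 := by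
      by_contra hcon2
      push_neg at hcon2
      exact absurd h3 (not_lt.mpr (mul_nonneg hρpos.le hcon2))
    linarith
  have hBadcard : (Bad.card : ℝ) ≤ Q * (((n:ℝ) + 1) * (2 * (U n).card * Real.exp (-(K/2)))
      + 2 * (U n).card * Real.exp (-(K/16))) := by
    have h1 : Bad.card ≤ ∑ t ∈ Finset.Icc 1 q, ((U n).filter fun u =>
        lam < |∑ r ∈ Apart n m t, Xf n ε r u|).card :=
      (Finset.card_le_card hBadsub).trans (Finset.card_biUnion_le
        (s := Finset.Icc 1 q)
        (t := fun t => (U n).filter fun u => lam < |∑ r ∈ Apart n m t, Xf n ε r u|))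
    calc (Bad.card : ℝ)
        ≤ ∑ t ∈ Finset.Icc 1 q, (((U n).filter fun u =>
            lam < |∑ r ∈ Apart n m t, Xf n ε r u|).card : ℝ) := by exact_mod_cast h1
      _ ≤ ∑ _t ∈ Finset.Icc 1 q, (((n:ℝ) + 1) * (2 * (U n).card * Real.exp (-(K/2)))
            + 2 * (U n).card * Real.exp (-(K/16))) := Finset.sum_le_sum hper
      _ = Q * (((n:ℝ) + 1) * (2 * (U n).card * Real.exp (-(K/2)))
            + 2 * (U n).card * Real.exp (-(K/16))) := by
          rw [Finset.sum_const, nsmul_eq_mul, Nat.card_Icc]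
          have hc2 : q + 1 - 1 = q := by omega
          rw [hc2, hQ]
  -- growth estimate
  have hKlow : c' * (n:ℝ) ^ d ≤ K / 32 := by
    have hde : d = e * (1/3) := by rw [hd]; ring
    have s1 : a ^ ((1:ℝ)/3) * (n:ℝ) ^ d = (a * (n:ℝ) ^ e) ^ ((1:ℝ)/3) := by
      rw [Real.mul_rpow ha.le (Real.rpow_nonneg (Nat.cast_nonneg n) e)]
      congr 1
      rw [hde, Real.rpow_mul (Nat.cast_nonneg n)]
    have s2 : (a * (n:ℝ) ^ e) ^ ((1:ℝ)/3) ≤ Q ^ ((1:ℝ)/3) := by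
      apply Real.rpow_le_rpow (by positivity) ?_ (by norm_num)
      rw [hQ, hq]
      exact Nat.le_ceil _
    have h1a : (1:ℝ) ≤ a⁻¹ := by
      rw [← one_div, le_div_iff₀ ha]
      linarith
    have s3 : Q ^ ((1:ℝ)/3) ≤ K := by
      rw [hK]
      exact le_mul_of_one_le_left (Real.rpow_nonneg hQpos.le _) h1a
    calc c' * (n:ℝ)^d = (a^((1:ℝ)/3) * (n:ℝ)^d)/32 := by rw [hc']; ring
      _ = (a * (n:ℝ)^e) ^ ((1:ℝ)/3) / 32 := by rw [s1]
      _ ≤ K / 32 := by linarith [s2.trans s3]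
  have hgrow : 2 * (n:ℝ) + 4 ≤ Real.exp (K / 32) := by
    set y : ℝ := c' * (n:ℝ) ^ d with hy
    have hypos : 0 ≤ y := by
      rw [hy]
      positivity
    have g2 : 6 * (n:ℝ) ≤ γ * n * n := by
      have h6 : (6:ℝ) ≤ n * γ := (div_le_iff₀ hγpos).mp hnγ
      calc 6 * (n:ℝ) ≤ (n * γ) * n :=
            mul_le_mul_of_nonneg_right h6 (by positivity)
        _ = γ * n * n := by ring
    have g3 : γ * (n:ℝ) * n ≤ γ * (n:ℝ) ^ (d * (M:ℝ)) := by
      have hnn2 : (n:ℝ) * n = (n:ℝ) ^ (((2:ℕ)):ℝ) := by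
        rw [Real.rpow_natCast]
        ring
      have h2dM : (((2:ℕ)):ℝ) ≤ d * M := by
        push_cast
        have hmm := mul_le_mul_of_nonneg_left hMr hdpos.le
        have hde2 : d * (6 / e) = 2 := by rw [hd]; field_simp; ring
        linarith
      have hrr := Real.rpow_le_rpow_of_exponent_le hnR h2dM
      calc γ * (n:ℝ) * n = γ * ((n:ℝ) * n) := by ring
        _ = γ * (n:ℝ) ^ (((2:ℕ)):ℝ) := by rw [hnn2]
        _ ≤ γ * (n:ℝ) ^ (d * (M:ℝ)) := mul_le_mul_of_nonneg_left hrr hγpos.le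
    have g4 : γ * (n:ℝ) ^ (d * (M:ℝ)) = (y / M) ^ M := by
      rw [hγ, hy, Real.rpow_mul (Nat.cast_nonneg n), Real.rpow_natCast, ← mul_pow]
      congr 1
      ring
    have g5 : (y / M) ^ M ≤ Real.exp y := by
      have h1 : y / M ≤ Real.exp (y / M) := by
        have := Real.add_one_le_exp (y / M)
        linarith
      calc (y/M)^M ≤ (Real.exp (y/M))^M := pow_le_pow_left₀ (by positivity) h1 M
        _ = Real.exp ((M:ℝ) * (y/M)) := by rw [← Real.exp_nat_mul]
        _ = Real.exp y := by
            congr 1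
            field_simp
    have g6 : Real.exp y ≤ Real.exp (K/32) := Real.exp_le_exp.mpr hKlow
    calc 2*(n:ℝ)+4 ≤ γ * n * n := by linarith
      _ ≤ γ * (n:ℝ)^(d*(M:ℝ)) := g3
      _ = (y/M)^M := g4
      _ ≤ Real.exp y := g5
      _ ≤ Real.exp (K/32) := g6
  -- final combination
  have hD3 : ((U n).card : ℝ) * ((2 ^ (n+1) : ℝ)⁻¹) ^ 3 = 1 := by
    rw [card_U]
    push_cast
    rw [← mul_pow, mul_inv_cancel₀ (by positivity), one_pow]
  have hreal : (Bad.card : ℝ) * ((2 ^ (n+1) : ℝ)⁻¹) ^ 3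
      ≤ 1 * Q * Real.exp (-(1/32) * a⁻¹ * Q ^ ((1:ℝ)/3)) := by
    have hexp32 : -(1/32 : ℝ) * a⁻¹ * Q ^ ((1:ℝ)/3) = -(K/32) := by rw [hK]; ring
    rw [hexp32, one_mul]
    have habs : (2*((n:ℝ)+1)) * Real.exp (-(K/2)) + 2 * Real.exp (-(K/16))
        ≤ Real.exp (-(K/32)) := by
      have e1 : Real.exp (-(K/2)) ≤ Real.exp (-(K/16)) :=
        Real.exp_le_exp.mpr (by linarith)
      have e2 : Real.exp (K/32) * Real.exp (-(K/16)) = Real.exp (-(K/32)) := by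
        rw [← Real.exp_add]
        congr 1
        ring
      have s1 : (2*((n:ℝ)+1)) * Real.exp (-(K/2)) ≤ (2*((n:ℝ)+1)) * Real.exp (-(K/16)) :=
        mul_le_mul_of_nonneg_left e1 (by positivity)
      have s2 : (2*((n:ℝ)+1)) * Real.exp (-(K/16)) + 2 * Real.exp (-(K/16))
          = (2*(n:ℝ)+4) * Real.exp (-(K/16)) := by ring
      have s3 : (2*(n:ℝ)+4) * Real.exp (-(K/16)) ≤ Real.exp (K/32) * Real.exp (-(K/16)) :=
        mul_le_mul_of_nonneg_right hgrow (Real.exp_pos _).le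
      linarith [s1, s2, s3, e2]
    calc (Bad.card : ℝ) * ((2 ^ (n+1) : ℝ)⁻¹) ^ 3
        ≤ (Q * (((n:ℝ) + 1) * (2 * (U n).card * Real.exp (-(K/2)))
            + 2 * (U n).card * Real.exp (-(K/16)))) * ((2 ^ (n+1) : ℝ)⁻¹) ^ 3 :=
          mul_le_mul_of_nonneg_right hBadcard (by positivity)
      _ = Q * ((2*((n:ℝ)+1)) * Real.exp (-(K/2)) + 2 * Real.exp (-(K/16)))
            * (((U n).card : ℝ) * ((2 ^ (n+1) : ℝ)⁻¹) ^ 3) := by ring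
      _ = Q * ((2*((n:ℝ)+1)) * Real.exp (-(K/2)) + 2 * Real.exp (-(K/16))) := by
          rw [hD3, mul_one]
      _ ≤ Q * Real.exp (-(K/32)) := mul_le_mul_of_nonneg_left habs hQpos.le
  calc volume {x ∈ unitCube 3 |
        (∏ t ∈ Finset.Icc 1 q, (1 + ρ * ∑ r ∈ Apart n m t, rfun ε r x)) < 0}
      ≤ volume (⋃ u ∈ Bad, box n u) := measure_mono (cover n q m ε ρ)
    _ ≤ ∑ u ∈ Bad, volume (box n u) := measure_biUnion_finset_le _ _
    _ = ENNReal.ofReal ((Bad.card : ℝ) * ((2 ^ (n+1) : ℝ)⁻¹) ^ 3) := by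
        rw [Finset.sum_congr rfl (fun u _ => volume_box n u), Finset.sum_const,
          nsmul_eq_mul]
        rw [← ENNReal.ofReal_pow (by positivity), ← ENNReal.ofReal_natCast,
          ← ENNReal.ofReal_mul (Nat.cast_nonneg _)]
    _ ≤ ENNReal.ofReal (1 * Q * Real.exp (-(1/32) * a⁻¹ * Q ^ ((1:ℝ)/3))) :=
        ENNReal.ofReal_le_ofReal hreal
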